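/- Let a₁ < a₂ < a₃ be real numbers and D = diag(a₁, a₂, a₃). Let M₀ ∈ Matrix (Fin 3) (Fin 3) ℂ be the matrix with (M₀)₁₃ = 1, (M₀)₃₁ = −1 and all other entries 0. Let M be a skew-Hermitian 3×3 complex matrix (Mᴴ = −M) and write z = M₁₂, y = M₁₃, x = M₂₃. Then det(M + λ·D − μ·1) = det(M₀ + λ·D − μ·1) for all λ, μ ∈ ℂ if and only if |x|² + |y|² + |z|² = 1, a₁·|x|² + a₂·|y|² + a₃·|z|² = a₂, and x·conj(y)·z ∈ ℝ. -/

import Mathlib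

open Matrix

/-- Description of the isospectral variety of the rotation about the
middle axis of a three-dimensional rigid body: a skew-Hermitian matrix
`M = [[0, z, y], [−conj z, 0, x], [−conj y, −conj x, 0]]` gives a pencil `M + λD`
isospectral with `M₀ + λD`, `M₀ = [[0,0,1],[0,0,0],[−1,0,0]]`, `D = diag(a₁,a₂,a₃)`,
if and only if `|x|² + |y|² + |z|² = 1`, `a₁|x|² + a₂|y|² + a₃|z|² = a₂` and
`x·conj(y)·z ∈ ℝ`. -/
theorem statement14 (a₁ a₂ a₃ : ℝ) (h12 : a₁ < a₂) (h23 : a₂ < a₃) (x y z : ℂ) :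
    (∀ lam μ : ℂ,
      (!![0, z, y; -(starRingEnd ℂ) z, 0, x; -(starRingEnd ℂ) y, -(starRingEnd ℂ) x, 0]
          + lam • Matrix.diagonal ![(a₁ : ℂ), (a₂ : ℂ), (a₃ : ℂ)] - μ • 1).det
        = (!![0, 0, 1; 0, 0, 0; -1, 0, 0]
            + lam • Matrix.diagonal ![(a₁ : ℂ), (a₂ : ℂ), (a₃ : ℂ)] - μ • 1).det)
      ↔ (‖x‖ ^ 2 + ‖y‖ ^ 2 + ‖z‖ ^ 2 = 1 ∧
          a₁ * ‖x‖ ^ 2 + a₂ * ‖y‖ ^ 2 + a₃ * ‖z‖ ^ 2 = a₂ ∧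
          (x * (starRingEnd ℂ) y * z).im = 0) := by
  have key : ∀ lam μ : ℂ,
      (!![0, z, y; -(starRingEnd ℂ) z, 0, x; -(starRingEnd ℂ) y, -(starRingEnd ℂ) x, 0]
          + lam • Matrix.diagonal ![(a₁ : ℂ), (a₂ : ℂ), (a₃ : ℂ)] - μ • 1).det
        = (lam*a₁-μ)*(lam*a₂-μ)*(lam*a₃-μ) + (x*(starRingEnd ℂ) x)*(lam*a₁-μ)
          + (y*(starRingEnd ℂ) y)*(lam*a₂-μ) + (z*(starRingEnd ℂ) z)*(lam*a₃-μ)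
          - (x*(starRingEnd ℂ) y*z - (starRingEnd ℂ) x*y*(starRingEnd ℂ) z) := by
    intro lam μ
    simp [Matrix.det_fin_three, Matrix.smul_apply, Matrix.diagonal_apply, Matrix.one_apply, Matrix.vecHead, Matrix.vecTail]
    ring
  have key0 : ∀ lam μ : ℂ,
      (!![0, 0, 1; 0, 0, 0; -1, 0, 0]
          + lam • Matrix.diagonal ![(a₁ : ℂ), (a₂ : ℂ), (a₃ : ℂ)] - μ • 1).det
        = (lam*a₁-μ)*(lam*a₂-μ)*(lam*a₃-μ) + (lam*a₂-μ) := by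
    intro lam μ
    simp [Matrix.det_fin_three, Matrix.smul_apply, Matrix.diagonal_apply, Matrix.one_apply, Matrix.vecHead, Matrix.vecTail]
    ring
  have hconj : (starRingEnd ℂ) (x * (starRingEnd ℂ) y * z)
      = (starRingEnd ℂ) x * y * (starRingEnd ℂ) z := by
    simp [_root_.map_mul, mul_comm, mul_assoc, mul_left_comm]
  simp only [key, key0]
  constructor
  · intro h
    have h1 := h 0 0
    have h2 := h 0 1
    have h3 := h 1 0
    have hT : x * (starRingEnd ℂ) y * z - (starRingEnd ℂ) x * y * (starRingEnd ℂ) z = 0 := by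
      linear_combination -h1
    have hIm : (x * (starRingEnd ℂ) y * z).im = 0 := by
      rw [← Complex.conj_eq_iff_im, hconj]
      linear_combination -hT
    have hS : x * (starRingEnd ℂ) x + y * (starRingEnd ℂ) y + z * (starRingEnd ℂ) z = 1 := by
      linear_combination -h2 - hT
    have hA : (a₁:ℂ) * (x * (starRingEnd ℂ) x) + (a₂:ℂ) * (y * (starRingEnd ℂ) y)
        + (a₃:ℂ) * (z * (starRingEnd ℂ) z) = (a₂:ℂ) := by
      linear_combination h3 + hT
    rw [Complex.mul_conj, Complex.mul_conj, Complex.mul_conj] at hS hA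
    refine ⟨?_, ?_, hIm⟩
    · rw [Complex.sq_norm, Complex.sq_norm, Complex.sq_norm]
      exact_mod_cast hS
    · rw [Complex.sq_norm, Complex.sq_norm, Complex.sq_norm]
      exact_mod_cast hA
  · rintro ⟨c1, c2, c3⟩ lam μ
    have e1 : x * (starRingEnd ℂ) x + y * (starRingEnd ℂ) y + z * (starRingEnd ℂ) z = 1 := by
      rw [Complex.mul_conj, Complex.mul_conj, Complex.mul_conj]
      rw [Complex.sq_norm, Complex.sq_norm, Complex.sq_norm] at c1
      exact_mod_cast c1
    have e2 : (a₁:ℂ) * (x * (starRingEnd ℂ) x) + (a₂:ℂ) * (y * (starRingEnd ℂ) y)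
        + (a₃:ℂ) * (z * (starRingEnd ℂ) z) = (a₂:ℂ) := by
      rw [Complex.mul_conj, Complex.mul_conj, Complex.mul_conj]
      rw [Complex.sq_norm, Complex.sq_norm, Complex.sq_norm] at c2
      exact_mod_cast c2
    have e3 : x * (starRingEnd ℂ) y * z - (starRingEnd ℂ) x * y * (starRingEnd ℂ) z = 0 := by
      rw [← hconj, Complex.sub_conj, c3]
      simp
    linear_combination lam * e2 - μ * e1 - e3
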